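/- A 2-connected simple graph G is minimally 2-connected (i.e., for every edge e, G − e is not 2-connected) if and only if G is chordless, meaning no cycle of G has a chord (an edge joining two nonconsecutive vertices of the cycle). -/

import Mathlib

open SimpleGraph

/-- A proper edge coloring: edges of `G` sharing a vertex get different colors. -/
def IsProperEdgeColoring {V : Type*} (G : SimpleGraph V) {t : ℕ} (c : Sym2 V → Fin t) : Prop :=
  ∀ e₁ ∈ G.edgeSet, ∀ e₂ ∈ G.edgeSet, e₁ ≠ e₂ → (∃ v, v ∈ e₁ ∧ v ∈ e₂) → c e₁ ≠ c e₂

/-- The chromatic index: least number of colors in a proper edge coloring. -/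
noncomputable def chromaticIndex {V : Type*} (G : SimpleGraph V) : ℕ :=
  sInf {t | ∃ c : Sym2 V → Fin t, IsProperEdgeColoring G c}

/-- Color `c` is missing at vertex `w` under coloring `α`. -/
def MissingAt {V : Type*} (G : SimpleGraph V) {t : ℕ} (α : Sym2 V → Fin t) (c : Fin t)
    (w : V) : Prop :=
  ∀ e ∈ G.edgeSet, w ∈ e → α e ≠ c

/-- The subgraph `K_α(a,b)` induced by the edges colored `a` or `b`. -/
def bicolored {V : Type*} (G : SimpleGraph V) {t : ℕ} (α : Sym2 V → Fin t) (a b : Fin t) :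
    SimpleGraph V :=
  SimpleGraph.fromEdgeSet {e | e ∈ G.edgeSet ∧ (α e = a ∨ α e = b)}

/-- `β` is obtained from `α` by a single Kempe change: swapping two colors `a`, `b` on a
connected component of the bicolored subgraph `K_α(a,b)`. -/
def IsKempeSwap {V : Type*} (G : SimpleGraph V) {t : ℕ} (α β : Sym2 V → Fin t) : Prop :=
  ∃ a b : Fin t, ∃ C : (bicolored G α a b).ConnectedComponent,
    (∀ e ∈ G.edgeSet, (α e = a ∨ α e = b) →
      (∀ v ∈ e, (bicolored G α a b).connectedComponentMk v = C) →
      ((α e = a ∧ β e = b) ∨ (α e = b ∧ β e = a))) ∧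
    (∀ e : Sym2 V, (e ∉ G.edgeSet ∨ (α e ≠ a ∧ α e ≠ b) ∨
        ∃ v ∈ e, (bicolored G α a b).connectedComponentMk v ≠ C) → β e = α e)

/-- Kempe equivalence: reachability by a sequence of Kempe changes. -/
def KempeEquiv {V : Type*} (G : SimpleGraph V) {t : ℕ} (α β : Sym2 V → Fin t) : Prop :=
  Relation.ReflTransGen (IsKempeSwap G) α β

/-- `G` is chordless: in every cycle, any two nonconsecutive vertices are nonadjacent. -/
def Chordless {V : Type*} (G : SimpleGraph V) : Prop :=
  ∀ n : ℕ, 3 ≤ n → ∀ c : ZMod n → V, Function.Injective c →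
    (∀ i, G.Adj (c i) (c (i + 1))) →
    ∀ i j : ZMod n, j ≠ i → j ≠ i + 1 → i ≠ j + 1 → ¬ G.Adj (c i) (c j)

/-- An `α`-fan at `u`: edges `u x₀, …, u xₚ` with `m i` a color missing at `x i`
and `α (u x_{i+1}) = m i`. -/
structure IsFan {V : Type*} (G : SimpleGraph V) {t : ℕ} (α : Sym2 V → Fin t)
    (u : V) (p : ℕ) (x : ℕ → V) (m : ℕ → Fin t) : Prop where
  adj : ∀ i ≤ p, G.Adj u (x i)
  inj : ∀ i ≤ p, ∀ j ≤ p, x i = x j → i = j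
  missing : ∀ i ≤ p, MissingAt G α (m i) (x i)
  succ : ∀ i < p, α s(u, x (i + 1)) = m i

/-- The coloring `X_u^{-1}(α,v)`: each fan edge `u xᵢ` is recolored with `m i`,
all other edges keep their color. -/
def IsFanRecolor {V : Type*} {t : ℕ} (α : Sym2 V → Fin t)
    (u : V) (p : ℕ) (x : ℕ → V) (m : ℕ → Fin t) (β : Sym2 V → Fin t) : Prop :=
  (∀ i ≤ p, β s(u, x i) = m i) ∧ (∀ e : Sym2 V, (∀ i ≤ p, e ≠ s(u, x i)) → β e = α e)

/-- A cycle fan is saturated if for every `i` the component of `K_α(α(u xᵢ), m_α(u))`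
containing `u` also contains `x_{i-1}` (cyclically). -/
def SaturatedCycleFan {V : Type*} (G : SimpleGraph V) {t : ℕ} (α : Sym2 V → Fin t)
    (u : V) (p : ℕ) (x : ℕ → V) (mu : Fin t) : Prop :=
  ∀ i ≤ p, (bicolored G α (α s(u, x i)) mu).connectedComponentMk u =
    (bicolored G α (α s(u, x i)) mu).connectedComponentMk (x (if i = 0 then p else i - 1))

/-- `G` is 2-connected: at least 3 vertices and deleting any vertex leaves it connected. -/
def TwoConnected {V : Type*} [Fintype V] (G : SimpleGraph V) : Prop :=
  3 ≤ Fintype.card V ∧ ∀ v : V, (G.induce {u | u ≠ v}).Connected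

section AuxLemmas
variable {W : Type*}


variable {W : Type*}

lemma reach_transfer {H K : SimpleGraph W} (h : ∀ a b : W, H.Adj a b → K.Reachable a b) :
    ∀ {a b : W}, H.Reachable a b → K.Reachable a b := by
  intro a b hr
  obtain ⟨p⟩ := hr
  induction p with
  | nil => exact Reachable.refl _
  | cons ha _ ih => exact (h _ _ ha).trans ih

lemma connected_transfer {H K : SimpleGraph W} (h : ∀ a b : W, H.Adj a b → K.Reachable a b)
    (hc : H.Connected) : K.Connected := by
  haveI : Nonempty W := hc.nonempty
  exact Connected.mk (fun a b => reach_transfer h (hc.preconnected a b))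

lemma exists_third [Fintype W] (h3 : 3 ≤ Fintype.card W) (a b : W) :
    ∃ z : W, z ≠ a ∧ z ≠ b := by
  classical
  by_contra h
  push_neg at h
  have hsub : (Finset.univ : Finset W) ⊆ {a, b} := by
    intro z _
    simp only [Finset.mem_insert, Finset.mem_singleton]
    by_cases hz : z = a
    · exact Or.inl hz
    · exact Or.inr (h z hz)
  have := Finset.card_le_card hsub
  have h2 : ({a, b} : Finset W).card ≤ 2 := Finset.card_insert_le a {b} |>.trans (by simp)
  simp only [Finset.card_univ] at this
  omega

lemma natCast_inj_of_lt {n a b : ℕ} (ha : a < n) (hb : b < n) (h : (a : ZMod n) = b) : a = b := by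
  haveI : NeZero n := ⟨by omega⟩
  have := congrArg ZMod.val h
  rwa [ZMod.val_cast_of_lt ha, ZMod.val_cast_of_lt hb] at this

lemma exists_path_avoiding {G : SimpleGraph W} {z : W} (hconn : (G.induce {u | u ≠ z}).Connected)
    {a b : W} (ha : a ≠ z) (hb : b ≠ z) :
    ∃ p : G.Walk a b, p.IsPath ∧ ∀ u ∈ p.support, u ≠ z := by
  classical
  obtain ⟨q0⟩ := hconn.preconnected ⟨a, ha⟩ ⟨b, hb⟩
  let q := q0.toPath
  let f := SimpleGraph.Embedding.induce (G := G) {u | u ≠ z}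
  have hend1 : f.toHom ⟨a, ha⟩ = a := rfl
  have hend2 : f.toHom ⟨b, hb⟩ = b := rfl
  refine ⟨(((q : (G.induce {u | u ≠ z}).Walk _ _).map f.toHom).copy hend1 hend2), ?_, ?_⟩
  · rw [Walk.isPath_copy]
    exact Walk.map_isPath_of_injective f.injective q.2
  · intro u hu
    rw [Walk.support_copy, Walk.support_map] at hu
    obtain ⟨⟨u', hu'⟩, _, rfl⟩ := List.mem_map.mp hu
    exact hu'






lemma exists_prefix_until {G : SimpleGraph W} (S : Set W) :
    ∀ {y x : W} (P : G.Walk y x), x ∈ S →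
    ∃ (z : W) (Q : G.Walk y z), z ∈ S ∧ (∀ u ∈ Q.support, u ∈ S → u = z) ∧
      (∀ u ∈ Q.support, u ∈ P.support) ∧ (P.IsPath → Q.IsPath) := by
  intro y x P
  induction P with
  | nil =>
    intro hx
    exact ⟨_, Walk.nil, hx, by simp, by simp, fun _ => Walk.IsPath.nil⟩
  | @cons a b c h P' ih =>
    intro hx
    by_cases ha : a ∈ S
    · exact ⟨a, Walk.nil, ha, by simp, by simp, fun _ => Walk.IsPath.nil⟩
    · obtain ⟨z, Q', hz, huniq, hsub, hpath⟩ := ih hx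
      refine ⟨z, Walk.cons h Q', hz, ?_, ?_, ?_⟩
      · intro u hu huS
        rw [Walk.support_cons, List.mem_cons] at hu
        rcases hu with rfl | hu
        · exact absurd huS ha
        · exact huniq u hu huS
      · intro u hu
        rw [Walk.support_cons, List.mem_cons] at hu ⊢
        rcases hu with rfl | hu
        · exact Or.inl rfl
        · exact Or.inr (hsub u hu)
      · intro hP
        rw [Walk.cons_isPath_iff] at hP ⊢
        exact ⟨hpath hP.1, fun hz' => hP.2 (hsub a hz')⟩

lemma cycle_split [DecidableEq W] {G : SimpleGraph W} {v u : W} {c : G.Walk v v} (hc : c.IsCycle)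
    (hu : u ∈ c.support) (huv : u ≠ v) :
    (c.takeUntil u hu).IsPath ∧ (c.dropUntil u hu).IsPath := by
  set T := c.takeUntil u hu with hT
  set D := c.dropUntil u hu with hD
  have hspec : T.append D = c := c.take_spec hu
  have hsupp : c.support = T.support ++ D.support.tail := by
    rw [← hspec, Walk.support_append]
  have htail : c.support.tail = T.support.tail ++ D.support.tail := by
    rw [hsupp]
    conv_lhs => rw [Walk.support_eq_cons T]
    simp [List.cons_append]
  have hnd : (T.support.tail ++ D.support.tail).Nodup := htail ▸ hc.support_nodup
  rw [List.nodup_append] at hnd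
  obtain ⟨hnd1, hnd2, hdisj⟩ := hnd
  have huT : u ∈ T.support.tail := by
    have := T.end_mem_support
    rw [Walk.support_eq_cons T, List.mem_cons] at this
    rcases this with h' | h'
    · exact absurd h' huv
    · exact h'
  have hvD : v ∈ D.support.tail := by
    have := D.end_mem_support
    rw [Walk.support_eq_cons D, List.mem_cons] at this
    rcases this with h' | h'
    · exact absurd h'.symm huv
    · exact h'
  constructor
  · apply Walk.IsPath.mk'
    rw [Walk.support_eq_cons T, List.nodup_cons]
    exact ⟨fun hvT => hdisj v hvT v hvD rfl, hnd1⟩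
  · apply Walk.IsPath.mk'
    rw [Walk.support_eq_cons D, List.nodup_cons]
    exact ⟨fun huD => hdisj u huT u huD rfl, hnd2⟩

lemma getVert_eq_getElem {G : SimpleGraph W} {a b : W} (p : G.Walk a b) (i : ℕ)
    (hi : i ≤ p.length) :
    p.getVert i = p.support[i]'(by rw [Walk.length_support]; omega) := by
  induction p generalizing i with
  | nil =>
    have : i = 0 := by simpa using hi
    subst this
    simp
  | @cons u v w h p' ih =>
    cases i with
    | zero => simp
    | succ n =>
      rw [Walk.getVert_cons_succ]
      have hs : (Walk.cons h p').support = u :: p'.support := Walk.support_cons h p'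
      rw [List.getElem_of_eq hs, List.getElem_cons_succ]
      exact ih n (by simp only [Walk.length_cons] at hi; omega)

lemma cycle_getVert_inj {G : SimpleGraph W} {x : W} {C : G.Walk x x} (hC : C.IsCycle)
    {a b : ℕ} (ha : a < C.length) (hb : b < C.length) (h : C.getVert a = C.getVert b) :
    a = b := by
  have hn3 := hC.three_le_length
  have hlen : C.support.tail.length = C.length := by
    rw [List.length_tail, Walk.length_support]
    omega
  have key : ∀ (i : ℕ) (_h1 : 1 ≤ i) (_h2 : i ≤ C.length),
      C.getVert i = C.support.tail[i-1]'(by omega) := by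
    intro i h1 h2
    rw [getVert_eq_getElem C i h2]
    have ht : C.support = x :: C.support.tail := C.support_eq_cons
    rw [List.getElem_of_eq ht]
    obtain ⟨j, rfl⟩ : ∃ j, i = j + 1 := ⟨i - 1, by omega⟩
    simp
  have hlast : C.support.tail[C.length - 1]'(by omega) = x := by
    have := key C.length (by omega) le_rfl
    rw [Walk.getVert_length] at this
    exact this.symm
  have hnd := hC.support_nodup
  rcases Nat.eq_zero_or_pos a with rfl | hapos
  · rcases Nat.eq_zero_or_pos b with rfl | hbpos
    · rfl
    · exfalso
      rw [Walk.getVert_zero, key b hbpos (by omega)] at h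
      have : b - 1 = C.length - 1 := by
        rw [← hnd.getElem_inj_iff]
        rw [hlast, ← h]
        all_goals omega
      omega
  · rcases Nat.eq_zero_or_pos b with rfl | hbpos
    · exfalso
      rw [Walk.getVert_zero, key a hapos (by omega)] at h
      have : a - 1 = C.length - 1 := by
        rw [← hnd.getElem_inj_iff]
        rw [hlast, h]
        all_goals omega
      omega
    · rw [key a hapos (by omega), key b hbpos (by omega)] at h
      have : a - 1 = b - 1 := by rw [← hnd.getElem_inj_iff]; exact h
      omega

lemma mem_tail_of_closed {G : SimpleGraph W} {v : W} (c : G.Walk v v) (hnil : c.length ≠ 0) :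
    ∀ u, u ∈ c.support ↔ u ∈ c.support.tail := by
  cases c with
  | nil => simp at hnil
  | cons h p =>
    intro u
    rw [Walk.support_cons]
    simp only [List.tail_cons, List.mem_cons]
    constructor
    · rintro (rfl | hu)
      · exact p.end_mem_support
      · exact hu
    · exact Or.inr

lemma preconn_of_pieces [Fintype W] {H : SimpleGraph W} (h3 : 3 ≤ Fintype.card W)
    (hind : ∀ v : W, (H.induce {u | u ≠ v}).Connected) : H.Connected := by
  haveI : Nonempty W := Fintype.card_pos_iff.mp (by omega)
  refine Connected.mk ?_
  intro a b
  by_cases hab : a = b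
  · exact hab ▸ Reachable.refl a
  · obtain ⟨z, hza, hzb⟩ := exists_third h3 a b
    obtain ⟨p, -, -⟩ := exists_path_avoiding (hind z) (Ne.symm hza) (Ne.symm hzb)
    exact ⟨p⟩

lemma cycle_through [Fintype W] {H : SimpleGraph W} (h3 : 3 ≤ Fintype.card W)
    (hind : ∀ v : W, (H.induce {u | u ≠ v}).Connected) :
    ∀ (x y : W), x ≠ y → ∃ C : H.Walk x x, C.IsCycle ∧ y ∈ C.support := by
  classical
  have hconn : H.Connected := preconn_of_pieces h3 hind
  suffices key : ∀ d (x y : W), x ≠ y → H.dist x y = d →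
      ∃ C : H.Walk x x, C.IsCycle ∧ y ∈ C.support by
    intro x y hxy
    exact key (H.dist x y) x y hxy rfl
  intro d
  induction d using Nat.strong_induction_on with
  | _ d IH =>
  intro x y hxy hd
  have hreach : H.Reachable x y := hconn.preconnected x y
  have hdpos : 0 < d := by rw [← hd]; exact hreach.pos_dist_of_ne hxy
  obtain ⟨p, hp⟩ := hreach.exists_walk_length_eq_dist
  cases hrev : p.reverse with
  | nil =>
    exfalso
    have := congrArg Walk.length hrev
    rw [Walk.length_reverse] at this
    simp only [Walk.length_nil] at this
    omega
  | @cons _ w _ h' q =>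
    -- h' : H.Adj y w, q : H.Walk w x
    have hqlen : q.length = d - 1 := by
      have := congrArg Walk.length hrev
      rw [Walk.length_reverse, Walk.length_cons, hp, hd] at this
      omega
    have hdistxw : H.dist x w ≤ d - 1 := by
      have := H.dist_le q.reverse
      rwa [Walk.length_reverse, hqlen] at this
    have hwy : w ≠ y := h'.ne'
    by_cases hwx : w = x
    · -- base case : x adjacent to y
      rw [hwx] at h'
      have hadjxy : H.Adj x y := h'.symm
      obtain ⟨z', hz'y, hz'x⟩ := exists_third h3 y x
      obtain ⟨r, hrpath, hravoid⟩ := exists_path_avoiding (hind x) (Ne.symm hxy) hz'x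
      have hrlen : 0 < r.length := by
        rcases Nat.eq_zero_or_pos r.length with h0 | h0
        · exact absurd (Walk.eq_of_length_eq_zero h0) (Ne.symm hz'y)
        · exact h0
      set w' := r.getVert 1 with hw'
      have hyw' : H.Adj y w' := by
        have := r.adj_getVert_succ (i := 0) hrlen
        rwa [Walk.getVert_zero] at this
      have hw'mem : w' ∈ r.support :=
        Walk.mem_support_iff_exists_getVert.mpr ⟨1, rfl, by omega⟩
      have hw'x : w' ≠ x := hravoid w' hw'mem
      have hw'y : w' ≠ y := hyw'.ne'
      obtain ⟨P, hPpath, hPavoid⟩ := exists_path_avoiding (hind y) hxy hw'y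
      refine ⟨Walk.cons hadjxy (Walk.cons hyw' P.reverse), ?_, ?_⟩
      · rw [Walk.cons_isCycle_iff]
        constructor
        · rw [Walk.cons_isPath_iff]
          refine ⟨hPpath.reverse, ?_⟩
          rw [Walk.support_reverse, List.mem_reverse]
          exact fun hc => (hPavoid y hc) rfl
        · rw [Walk.edges_cons, List.mem_cons]
          rintro (hcase | hcase)
          · rw [Sym2.eq_iff] at hcase
            rcases hcase with ⟨rfl, -⟩ | ⟨rfl, -⟩
            · exact hxy rfl
            · exact hw'x rfl
          · have := Walk.snd_mem_support_of_mem_edges _ hcase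
            rw [Walk.support_reverse, List.mem_reverse] at this
            exact hPavoid y this rfl
      · rw [Walk.support_cons, Walk.support_cons]
        exact List.mem_cons_of_mem _ List.mem_cons_self
    · -- inductive step
      have hxw : x ≠ w := fun hc => hwx hc.symm
      have hd1 : H.dist x w = d - 1 := by
        refine le_antisymm hdistxw ?_
        obtain ⟨s, hs⟩ := (hconn.preconnected x w).exists_walk_length_eq_dist
        have h5 := H.dist_le (s.concat h'.symm)
        rw [Walk.length_concat, hd, hs] at h5
        omega
      obtain ⟨C, hC, hwC⟩ := IH (d-1) (by omega) x w hxw hd1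
      by_cases hyC : y ∈ C.support
      · exact ⟨C, hC, hyC⟩
      · have hCnl : C.length ≠ 0 := by have := hC.three_le_length; omega
        obtain ⟨P, hPpath, hPavoid⟩ := exists_path_avoiding (hind w) (Ne.symm hwy) hxw
        obtain ⟨x₀, Q, hx₀C, huniq, hsub, hQpath'⟩ :=
          exists_prefix_until {u | u ∈ C.support} P C.start_mem_support
        have hQpath := hQpath' hPpath
        have hx₀w : x₀ ≠ w := hPavoid x₀ (hsub x₀ Q.end_mem_support)
        set C' := C.rotate x₀ hx₀C with hC'def
        have hC'c : C'.IsCycle := hC.rotate _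
        have hC'nl : C'.length ≠ 0 := by have := hC'c.three_le_length; omega
        have hmemC' : ∀ u, u ∈ C'.support ↔ u ∈ C.support := by
          intro u
          rw [mem_tail_of_closed C' hC'nl, mem_tail_of_closed C hCnl,
            (Walk.support_rotate C x₀ hx₀C).mem_iff]
        have hwC' : w ∈ C'.support := (hmemC' w).mpr hwC
        have hxC' : x ∈ C'.support := (hmemC' x).mpr C.start_mem_support
        obtain ⟨hT, hD⟩ := cycle_split hC'c hwC' (Ne.symm hx₀w)
        have hxTD : x ∈ (C'.takeUntil w hwC').support ∨ x ∈ (C'.dropUntil w hwC').support := by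
          have hspec := C'.take_spec hwC'
          rw [← Walk.mem_support_append_iff, hspec]
          exact hxC'
        obtain ⟨A, hApath, hAsub, hxA⟩ : ∃ A : H.Walk w x₀, A.IsPath ∧
            (∀ u ∈ A.support, u ∈ C'.support) ∧ x ∈ A.support := by
          rcases hxTD with hx1 | hx2
          · refine ⟨(C'.takeUntil w hwC').reverse, hT.reverse, ?_, ?_⟩
            · intro u hu
              rw [Walk.support_reverse, List.mem_reverse] at hu
              exact Walk.support_takeUntil_subset _ _ hu
            · rw [Walk.support_reverse, List.mem_reverse]
              exact hx1
          · exact ⟨C'.dropUntil w hwC', hD,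
              fun u hu => Walk.support_dropUntil_subset _ _ hu, hx2⟩
        -- build the new cycle based at y
        have hQrev := hQpath.reverse
        have hx₀tl : x₀ ∉ Q.reverse.support.tail := by
          have hnodup := hQrev.support_nodup
          rw [Walk.support_eq_cons Q.reverse, List.nodup_cons] at hnodup
          exact hnodup.1
        have hRpath : (A.append Q.reverse).IsPath := by
          rw [Walk.isPath_def, Walk.support_append, List.nodup_append]
          refine ⟨hApath.support_nodup, hQrev.support_nodup.sublist (List.tail_sublist _), ?_⟩
          intro u huA u' hutl huu'
          subst huu'
          have huQ : u ∈ Q.support := by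
            have : u ∈ Q.reverse.support := List.mem_of_mem_tail hutl
            rwa [Walk.support_reverse, List.mem_reverse] at this
          have huC : u ∈ C.support := (hmemC' u).mp (hAsub u huA)
          have : u = x₀ := huniq u huQ huC
          subst this
          exact hx₀tl hutl
        refine ?_
        have hCyc : (Walk.cons h' (A.append Q.reverse)).IsCycle := by
          rw [Walk.cons_isCycle_iff]
          refine ⟨hRpath, ?_⟩
          rw [Walk.edges_append, List.mem_append]
          rintro (hcase | hcase)
          · have := Walk.fst_mem_support_of_mem_edges _ hcase
            exact hyC ((hmemC' y).mp (hAsub y this))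
          · have hwQ : w ∈ Q.reverse.support := Walk.snd_mem_support_of_mem_edges _ hcase
            rw [Walk.support_reverse, List.mem_reverse] at hwQ
            exact hPavoid w (hsub w hwQ) rfl
        have hxCyc : x ∈ (Walk.cons h' (A.append Q.reverse)).support := by
          rw [Walk.support_cons, List.mem_cons]
          right
          rw [Walk.mem_support_append_iff]
          exact Or.inl hxA
        have hyCyc : y ∈ (Walk.cons h' (A.append Q.reverse)).support :=
          Walk.start_mem_support _
        refine ⟨(Walk.cons h' (A.append Q.reverse)).rotate x hxCyc, hCyc.rotate _, ?_⟩
        have hlen : ((Walk.cons h' (A.append Q.reverse)).rotate x hxCyc).length ≠ 0 := by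
          have := (hCyc.rotate hxCyc).three_le_length
          omega
        have hnl : (Walk.cons h' (A.append Q.reverse)).length ≠ 0 := by
          have := hCyc.three_le_length
          omega
        rw [mem_tail_of_closed _ hlen,
          (Walk.support_rotate _ x hxCyc).mem_iff, ← mem_tail_of_closed _ hnl]
        exact hyCyc


lemma reach_congr {K : SimpleGraph W} {a b a' b' : W} (ha : a = a') (hb : b = b')
    (h : K.Reachable a b) : K.Reachable a' b' := ha ▸ hb ▸ h



lemma arc_reachable {V : Type*} {G : SimpleGraph V} {n : ℕ} [NeZero n] {c : ZMod n → V}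
    (hadj : ∀ k, G.Adj (c k) (c (k+1))) (e : Sym2 V) (v : V) (i0 : ZMod n) :
    ∀ (d : ℕ) (hv : ∀ t : ℕ, t ≤ d → c (i0 + t) ≠ v)
      (_he : ∀ t : ℕ, t < d → s(c (i0 + t), c (i0 + t + 1)) ≠ e),
    ((G.deleteEdges {e}).induce {u | u ≠ v}).Reachable
      ⟨c i0, by simpa using hv 0 (Nat.zero_le _)⟩ ⟨c (i0 + d), hv d le_rfl⟩ := by
  intro d
  induction d with
  | zero =>
    intro hv _he
    exact reach_congr rfl (Subtype.ext (by norm_num)) (Reachable.refl _)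
  | succ d ih =>
    intro hv he
    have h1 := ih (fun t ht => hv t (by omega)) (fun t ht => he t (by omega))
    refine h1.trans (Adj.reachable ?_)
    have hcast : i0 + ((d+1 : ℕ) : ZMod n) = (i0 + d) + 1 := by push_cast; ring
    have hstep : G.Adj (c (i0 + d)) (c (i0 + (d+1 : ℕ))) := by
      rw [hcast]; exact hadj (i0 + d)
    show ((G.deleteEdges {e}).induce {u | u ≠ v}).Adj ⟨c (i0 + d), _⟩ ⟨c (i0 + (d+1:ℕ)), _⟩
    rw [comap_adj]
    rw [SimpleGraph.deleteEdges_adj]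
    refine ⟨hstep, ?_⟩
    simp only [Set.mem_singleton_iff, Function.Embedding.coe_subtype]
    rw [hcast]
    exact he d (by omega)
    
lemma chord_cycle_reach {V : Type*} {G : SimpleGraph V} {n : ℕ} (hn3 : 3 ≤ n) {c : ZMod n → V}
    (hinj : Function.Injective c) (hadj : ∀ k, G.Adj (c k) (c (k+1))) {i j : ZMod n}
    (hji : j ≠ i) (hji1 : j ≠ i + 1) (hij1 : i ≠ j + 1) (v : V) (hiv : c i ≠ v) (hjv : c j ≠ v) :
    ((G.deleteEdges {s(c i, c j)}).induce {u | u ≠ v}).Reachable ⟨c i, hiv⟩ ⟨c j, hjv⟩ := by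
  haveI : NeZero n := ⟨by omega⟩
  set d₁ := (j - i).val with hd₁
  have hd₁lt : d₁ < n := ZMod.val_lt _
  have hji' : j = i + (d₁ : ZMod n) := by rw [hd₁, ZMod.natCast_zmod_val]; ring
  have hd₁pos : 0 < d₁ := by
    rcases Nat.eq_zero_or_pos d₁ with h0 | h
    · exfalso
      apply hji
      rw [hji', h0]
      simp
    · exact h
  have hearc1 : ∀ t : ℕ, t < d₁ → s(c (i + t), c (i + t + 1)) ≠ s(c i, c j) := by
    intro t ht hcon
    rw [Sym2.eq_iff] at hcon
    rcases hcon with ⟨h1, h2⟩ | ⟨h1, h2⟩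
    · have ht0 : (t : ZMod n) = ((0:ℕ) : ZMod n) := by
        have := hinj h1
        push_cast
        linear_combination this - (by ring : i + (t : ZMod n) - (t:ZMod n) = i)
      have : t = 0 := natCast_inj_of_lt (by omega) (by omega) ht0
      subst this
      apply hji1
      have h6 := hinj h2
      rw [← h6]
      push_cast
      ring
    · have : (t : ZMod n) = ((d₁:ℕ) : ZMod n) := by
        have h3 := hinj h1
        rw [hji'] at h3
        exact add_left_cancel h3
      have := natCast_inj_of_lt (by omega) hd₁lt this
      omega
  by_cases hA : ∀ t : ℕ, t ≤ d₁ → c (i + t) ≠ v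
  · have := arc_reachable hadj s(c i, c j) v i d₁ hA hearc1
    exact reach_congr rfl (Subtype.ext (by simp only; rw [← hji'])) this
  · push_neg at hA
    obtain ⟨t₀, ht₀le, ht₀⟩ := hA
    have ht₀0 : t₀ ≠ 0 := by
      rintro rfl
      apply hiv
      rw [← ht₀]
      norm_num
    have ht₀d₁ : t₀ ≠ d₁ := by
      rintro rfl
      apply hjv
      rw [← ht₀, hji']
    set d₂ := n - d₁ with hd₂
    have harc2v : ∀ t : ℕ, t ≤ d₂ → c (j + t) ≠ v := by
      intro t ht hcon
      rw [← ht₀] at hcon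
      have h4 := hinj hcon
      rw [hji'] at h4
      have h5 : ((d₁ + t : ℕ) : ZMod n) = ((t₀ : ℕ) : ZMod n) := by
        push_cast at h4 ⊢
        linear_combination h4 - (by ring : i - i = 0)
      rcases Nat.lt_or_ge (d₁ + t) n with hlt | hge
      · have := natCast_inj_of_lt hlt (by omega) h5
        omega
      · have hdn : d₁ + t = n := by omega
        rw [hdn, ZMod.natCast_self] at h5
        have : (0:ℕ) = t₀ := natCast_inj_of_lt (n := n) (by omega) (by omega) (by rw [Nat.cast_zero]; exact h5)
        omega
    have hearc2 : ∀ t : ℕ, t < d₂ → s(c (j + t), c (j + t + 1)) ≠ s(c i, c j) := by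
      intro t ht hcon
      rw [Sym2.eq_iff] at hcon
      rcases hcon with ⟨h1, h2⟩ | ⟨h1, h2⟩
      · have h4 := hinj h1
        rw [hji'] at h4
        have h5 : ((d₁ + t : ℕ) : ZMod n) = ((0:ℕ) : ZMod n) := by
          push_cast
          linear_combination h4 - (by ring : i - i = 0)
        have := natCast_inj_of_lt (by omega) (by omega) h5
        omega
      · have h4 := hinj h1
        have h5 : (t : ZMod n) = ((0:ℕ):ZMod n) := by
          push_cast
          linear_combination h4 - (by ring : j - j = 0)
        have ht0 : t = 0 := natCast_inj_of_lt (by omega) (by omega) h5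
        subst ht0
        apply hij1
        have h6 := hinj h2
        rw [← h6]
        push_cast
        ring
    have := arc_reachable hadj s(c i, c j) v j d₂ harc2v hearc2
    have hend : j + ((d₂ : ℕ) : ZMod n) = i := by
      rw [hji']
      have : ((d₁ : ℕ) : ZMod n) + ((d₂ : ℕ) : ZMod n) = 0 := by
        rw [← Nat.cast_add]
        have : d₁ + d₂ = n := by omega
        rw [this, ZMod.natCast_self]
      linear_combination this
    exact (reach_congr rfl (Subtype.ext (by simp only; rw [hend])) this).symm

end AuxLemmas


theorem dirA {V : Type*} [Fintype V] (G : SimpleGraph V) (h2 : TwoConnected G)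
    (hmin : ∀ e ∈ G.edgeSet, ¬ TwoConnected (G.deleteEdges {e})) : Chordless G := by
  intro n hn3 c hinj hadj i j hji hji1 hij1 hadjij
  haveI : NeZero n := ⟨by omega⟩
  refine hmin s(c i, c j) (by rw [mem_edgeSet]; exact hadjij) ⟨h2.1, ?_⟩
  intro v
  refine connected_transfer ?_ (h2.2 v)
  rintro ⟨a, ha⟩ ⟨b, hb⟩ hab
  have habG : G.Adj a b := by
    rw [comap_adj] at hab
    exact hab
  by_cases hcase : s(a, b) = s(c i, c j)
  · rw [Sym2.eq_iff] at hcase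
    rcases hcase with ⟨rfl, rfl⟩ | ⟨rfl, rfl⟩
    · exact chord_cycle_reach hn3 hinj hadj hji hji1 hij1 v ha hb
    · exact (chord_cycle_reach hn3 hinj hadj hji hji1 hij1 v hb ha).symm
  · apply Adj.reachable
    show ((G.deleteEdges {s(c i, c j)}).induce {u | u ≠ v}).Adj ⟨a, ha⟩ ⟨b, hb⟩
    rw [comap_adj]
    simp only [Function.Embedding.coe_subtype]
    exact SimpleGraph.deleteEdges_adj.mpr ⟨habG, by simpa using hcase⟩

theorem dirB {V : Type*} [Fintype V] (G : SimpleGraph V) (hch : Chordless G) :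
    ∀ e ∈ G.edgeSet, ¬ TwoConnected (G.deleteEdges {e}) := by
  intro e he h2e
  induction e using Sym2.ind with
  | _ x y =>
  rw [mem_edgeSet] at he
  have hxy : x ≠ y := he.ne
  obtain ⟨C, hC, hyC⟩ := cycle_through h2e.1 h2e.2 x y hxy
  have hnadj : ¬ (G.deleteEdges {s(x,y)}).Adj x y := by
    rw [SimpleGraph.deleteEdges_adj]
    rintro ⟨-, hmem⟩
    exact hmem rfl
  have hn3 : 3 ≤ C.length := hC.three_le_length
  haveI : NeZero C.length := ⟨by omega⟩
  set c : ZMod C.length → V := fun k => C.getVert k.val with hcdef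
  have hinj : Function.Injective c := by
    intro a b hab
    exact ZMod.val_injective C.length (cycle_getVert_inj hC a.val_lt b.val_lt hab)
  have hadj' : ∀ k : ZMod C.length, (G.deleteEdges {s(x,y)}).Adj (c k) (c (k+1)) := by
    intro k
    have hkv : k.val < C.length := k.val_lt
    have hval1 : (1 : ZMod C.length).val = 1 := by
      rw [← Nat.cast_one, ZMod.val_cast_of_lt (by omega)]
    have hval : (k+1).val = (k.val + 1) % C.length := by
      rw [ZMod.val_add, hval1]
    by_cases hk : k.val + 1 < C.length
    · have h6 : (k+1).val = k.val + 1 := by rw [hval, Nat.mod_eq_of_lt hk]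
      show (G.deleteEdges {s(x,y)}).Adj (C.getVert k.val) (C.getVert (k+1).val)
      rw [h6]
      exact C.adj_getVert_succ hkv
    · have hkn : k.val + 1 = C.length := by omega
      have h0 : (k+1).val = 0 := by rw [hval, hkn, Nat.mod_self]
      have h7 := C.adj_getVert_succ (i := k.val) hkv
      rw [hkn, Walk.getVert_length] at h7
      show (G.deleteEdges {s(x,y)}).Adj (C.getVert k.val) (C.getVert (k+1).val)
      rw [h0, Walk.getVert_zero]
      exact h7
  have hadjG : ∀ k : ZMod C.length, G.Adj (c k) (c (k+1)) := fun k =>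
    (SimpleGraph.deleteEdges_adj.mp (hadj' k)).1
  obtain ⟨m, hm, hmle⟩ := Walk.mem_support_iff_exists_getVert.mp hyC
  have hm0 : m ≠ 0 := by rintro rfl; rw [Walk.getVert_zero] at hm; exact hxy hm
  have hmn : m ≠ C.length := by rintro rfl; rw [Walk.getVert_length] at hm; exact hxy hm
  have hmlt : m < C.length := by omega
  have hc0 : c 0 = x := by rw [hcdef]; simp [ZMod.val_zero]
  have hcj : c (m : ZMod C.length) = y := by
    rw [hcdef]
    simp only
    rw [ZMod.val_cast_of_lt hmlt]
    exact hm
  have hj0 : (m : ZMod C.length) ≠ 0 := by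
    intro hcon
    have h9 := congrArg ZMod.val hcon
    rw [ZMod.val_cast_of_lt hmlt, ZMod.val_zero] at h9
    exact hm0 h9
  have hj1 : (m : ZMod C.length) ≠ 0 + 1 := by
    intro hcon
    apply hnadj
    have h8 := hadj' 0
    rw [← hcon] at h8
    rw [hc0, hcj] at h8
    exact h8
  have hij1 : (0 : ZMod C.length) ≠ (m : ZMod C.length) + 1 := by
    intro hcon
    apply hnadj
    have h8 := hadj' (m : ZMod C.length)
    rw [← hcon] at h8
    rw [hc0, hcj] at h8
    exact h8.symm
  exact hch C.length hn3 c hinj hadjG 0 (m : ZMod C.length) hj0 hj1 hij1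
    (by rw [hc0, hcj]; exact he)

/-- A 2-connected graph is minimally 2-connected iff it is chordless. -/
theorem stmt2 {V : Type*} [Fintype V] (G : SimpleGraph V) (h2 : TwoConnected G) :
    (∀ e ∈ G.edgeSet, ¬ TwoConnected (G.deleteEdges {e})) ↔ Chordless G :=
  ⟨fun hmin => dirA G h2 hmin, fun hch e he => dirB G hch e he⟩
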